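/- Every element of Λ²₇ can be written uniquely in the form λ·ω + a∧dt + χ₆(a), where λ ∈ ℝ and a is a 1-form on ℝ⁶ (forms on ℝ⁶ being regarded as forms on ℝ⁷ via the projection ℝ⁷ → ℝ⁶ that forgets the t-coordinate); conversely every form λ·ω + a∧dt + χ₆(a) lies in Λ²₇. -/

import Mathlib

/- STATEMENT 5: every element of Λ²₇ can be written uniquely as λ·ω + a∧dt + χ₆(a) with
λ ∈ ℝ and a a 1-form on ℝ⁶ (regarded on ℝ⁷ via the projection forgetting t); conversely
every such form lies in Λ²₇.

We identify duals with the underlying spaces via the standard bases, so forms are elements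
of the exterior algebras of `V6 = Fin 6 → ℝ` and `V7 = Fin 7 → ℝ` (wedge = multiplication).
Coordinates on ℝ⁷: `t = ε 0, x₁ = ε 1, …, y₃ = ε 6`; on ℝ⁶: `x₁ = ε6 0, …, y₃ = ε6 5`.
`P : E6 →ₐ E7` is "regard a form on ℝ⁶ as a form on ℝ⁷"; a 1-form `a` on ℝ⁶ is `ι ℝ w`
for a unique coefficient vector `w : V6`.  `χ₆` is any linear map with the defining
property `χ₆(ι_vω) = ι_vρ` for all `v ∈ ℝ⁶`. -/

noncomputable section
open ExteriorAlgebra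

abbrev V6 : Type := Fin 6 → ℝ
abbrev E6 : Type := ExteriorAlgebra ℝ V6
abbrev V7 : Type := Fin 7 → ℝ
abbrev E7 : Type := ExteriorAlgebra ℝ V7

def ε6 (i : Fin 6) : E6 := ExteriorAlgebra.ι ℝ (Pi.single i 1)
def ε (i : Fin 7) : E7 := ExteriorAlgebra.ι ℝ (Pi.single i 1)

/-- Contraction (interior product) `ι_v`, in the first slot. -/
def ctr6 (v : V6) : E6 →ₗ[ℝ] E6 :=
  CliffordAlgebra.contractLeft ((Pi.basisFun ℝ (Fin 6)).toDual v)
def ctr (v : V7) : E7 →ₗ[ℝ] E7 :=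
  CliffordAlgebra.contractLeft ((Pi.basisFun ℝ (Fin 7)).toDual v)

def ω6 : E6 := ε6 0 * ε6 1 + ε6 2 * ε6 3 + ε6 4 * ε6 5
def ρ6 : E6 := -(ε6 1 * ε6 3 * ε6 5) + ε6 1 * ε6 2 * ε6 4 + ε6 0 * ε6 3 * ε6 4 + ε6 0 * ε6 2 * ε6 5

/-- The inclusion of the dual coordinates of ℝ⁶ into those of ℝ⁷ (dual to the projection
ℝ⁷ → ℝ⁶ forgetting the t-coordinate, which has index 0). -/
def incl : V6 →ₗ[ℝ] V7 where
  toFun v := Fin.cons 0 v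
  map_add' u v := by
    ext i
    refine Fin.cases ?_ (fun j => ?_) i <;> simp
  map_smul' c v := by
    ext i
    refine Fin.cases ?_ (fun j => ?_) i <;> simp

/-- Pullback of (constant-coefficient) forms on ℝ⁶ to forms on ℝ⁷ via the projection
forgetting t. -/
def P : E6 →ₐ[ℝ] E7 :=
  ExteriorAlgebra.lift ℝ ⟨(ExteriorAlgebra.ι ℝ).comp incl, fun _ =>
    ExteriorAlgebra.ι_sq_zero _⟩

/-- `φ₀ = ω∧dt + ρ`. -/
def φ₀ : E7 := P ω6 * ε 0 + P ρ6

/-- The linear map `v ↦ ι_vφ₀` on ℝ⁷. -/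
def iotaPhi : V7 →ₗ[ℝ] E7 :=
  ((CliffordAlgebra.contractLeft (Q := (0 : QuadraticForm ℝ V7))).flip φ₀) ∘ₗ
    (Pi.basisFun ℝ (Fin 7)).toDual

/-- `Λ²₇ = {ι_vφ₀ : v ∈ ℝ⁷}`. -/
def Λ27 : Submodule ℝ E7 := LinearMap.range iotaPhi


/-! ### Auxiliary lemmas -/

theorem tdl {n : ℕ} (v : Fin n → ℝ) (j : Fin n) :
    (Pi.basisFun ℝ (Fin n)).toDual v (Pi.single j 1) = v j := by
  rw [show (Pi.single j 1 : Fin n → ℝ) = Pi.basisFun ℝ (Fin n) j by simp,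
    Module.Basis.toDual_apply_left]
  simp

theorem ctr6_eps_mul (v : V6) (i : Fin 6) (b : E6) :
    ctr6 v (ε6 i * b) = v i • b - ε6 i * ctr6 v b := by
  simp [ctr6, ε6, ExteriorAlgebra.ι, CliffordAlgebra.contractLeft_ι_mul, tdl]

theorem ctr6_eps (v : V6) (i : Fin 6) : ctr6 v (ε6 i) = v i • 1 := by
  simp [ctr6, ε6, ExteriorAlgebra.ι, CliffordAlgebra.contractLeft_ι, tdl,
    Algebra.algebraMap_eq_smul_one]

theorem ctr_eps_mul (v : V7) (i : Fin 7) (b : E7) :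
    ctr v (ε i * b) = v i • b - ε i * ctr v b := by
  simp [ctr, ε, ExteriorAlgebra.ι, CliffordAlgebra.contractLeft_ι_mul, tdl]

theorem ctr_eps (v : V7) (i : Fin 7) : ctr v (ε i) = v i • 1 := by
  simp [ctr, ε, ExteriorAlgebra.ι, CliffordAlgebra.contractLeft_ι, tdl,
    Algebra.algebraMap_eq_smul_one]

theorem incl_single (i : Fin 6) : incl (Pi.single i 1) = Pi.single i.succ 1 := by
  ext j
  refine Fin.cases ?_ (fun k => ?_) j
  · simp [incl, (Fin.succ_ne_zero i).symm]
  · simp [incl, Pi.single_apply, Fin.succ_inj]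

theorem P_ι (w : V6) : P (ExteriorAlgebra.ι ℝ w) = ExteriorAlgebra.ι ℝ (incl w) := by
  unfold P
  rw [ExteriorAlgebra.lift_ι_apply]
  rfl

theorem P_eps (i : Fin 6) : P (ε6 i) = ε i.succ := by
  rw [ε6, P_ι, incl_single i]; rfl

def Jmap (u : V6) : V6 := ![-u 1, u 0, -u 3, u 2, -u 5, u 4]
def Jinv (w : V6) : V6 := ![w 1, -w 0, w 3, -w 2, w 5, -w 4]

@[simp] theorem Jmap0 (u : V6) : Jmap u 0 = -u 1 := rfl
@[simp] theorem Jmap1 (u : V6) : Jmap u 1 = u 0 := rfl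
@[simp] theorem Jmap2 (u : V6) : Jmap u 2 = -u 3 := rfl
@[simp] theorem Jmap3 (u : V6) : Jmap u 3 = u 2 := rfl
@[simp] theorem Jmap4 (u : V6) : Jmap u 4 = -u 5 := rfl
@[simp] theorem Jmap5 (u : V6) : Jmap u 5 = u 4 := rfl
@[simp] theorem Jinv0 (w : V6) : Jinv w 0 = w 1 := rfl
@[simp] theorem Jinv1 (w : V6) : Jinv w 1 = -w 0 := rfl
@[simp] theorem Jinv2 (w : V6) : Jinv w 2 = w 3 := rfl
@[simp] theorem Jinv3 (w : V6) : Jinv w 3 = -w 2 := rfl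
@[simp] theorem Jinv4 (w : V6) : Jinv w 4 = w 5 := rfl
@[simp] theorem Jinv5 (w : V6) : Jinv w 5 = -w 4 := rfl

theorem ι_expand (w : V6) : ExteriorAlgebra.ι ℝ w =
    w 0 • ε6 0 + w 1 • ε6 1 + w 2 • ε6 2 + w 3 • ε6 3 + w 4 • ε6 4 + w 5 • ε6 5 := by
  have h : w = w 0 • (Pi.single 0 1 : V6) + w 1 • (Pi.single 1 1 : V6) +
      w 2 • (Pi.single 2 1 : V6) + w 3 • (Pi.single 3 1 : V6) +
      w 4 • (Pi.single 4 1 : V6) + w 5 • (Pi.single 5 1 : V6) := by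
    funext j
    fin_cases j <;> simp [Pi.single_apply]
  rw [h]
  simp [ε6]

theorem K1 (w : V6) : ExteriorAlgebra.ι ℝ w = ctr6 (Jinv w) ω6 := by
  rw [ι_expand, ω6]
  simp [map_add, ctr6_eps_mul, ctr6_eps, mul_smul_comm, mul_one]
  module

theorem K1' (u : V6) : ExteriorAlgebra.ι ℝ (Jmap u) = ctr6 u ω6 := by
  rw [ι_expand, ω6]
  simp [map_add, ctr6_eps_mul, ctr6_eps, mul_smul_comm, mul_one]
  module

theorem iotaPhi_apply (v : V7) : iotaPhi v = ctr v φ₀ := rfl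

theorem K2 (v : V7) : iotaPhi v =
    v 0 • P ω6 + P (ctr6 (fun i => v i.succ) ω6) * ε 0 + P (ctr6 (fun i => v i.succ) ρ6) := by
  rw [iotaPhi_apply, φ₀, ω6, ρ6]
  simp [map_add, map_sub, map_neg, map_mul, map_smul, P_eps, add_mul, sub_mul, neg_mul,
    smul_mul_assoc, mul_assoc, ctr_eps_mul, ctr_eps, ctr6_eps_mul, ctr6_eps, mul_smul_comm,
    mul_one, smul_sub, smul_add, mul_sub, mul_add]
  module

@[simp] theorem fs2 : (Fin.succ 2 : Fin 7) = 3 := rfl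
@[simp] theorem fs3 : (Fin.succ 3 : Fin 7) = 4 := rfl
@[simp] theorem fs4 : (Fin.succ 4 : Fin 7) = 5 := rfl
@[simp] theorem fs5 : (Fin.succ 5 : Fin 7) = 6 := rfl

theorem key0 (l : ℝ) (w u : V6) :
    ctr (Pi.single 0 1) (l • P ω6 + P (ExteriorAlgebra.ι ℝ w) * ε 0 + P (ctr6 u ρ6)) =
      -P (ExteriorAlgebra.ι ℝ w) := by
  rw [ι_expand w, ω6, ρ6]
  simp [map_add, map_sub, map_neg, map_mul, map_smul, P_eps, add_mul, sub_mul, neg_mul,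
    smul_mul_assoc, mul_assoc, ctr_eps_mul, ctr_eps, ctr6_eps_mul, ctr6_eps, mul_smul_comm,
    mul_one, smul_sub, smul_add, mul_sub, mul_add, Pi.single_apply, Fin.succ_ne_zero]
  module

theorem keyc (l : ℝ) (w u : V6) :
    ctr (Pi.single 2 1) (ctr (Pi.single 1 1)
      (l • P ω6 + P (ExteriorAlgebra.ι ℝ w) * ε 0 + P (ctr6 u ρ6))) = l • 1 := by
  rw [ι_expand w, ω6, ρ6]
  simp [map_add, map_sub, map_neg, map_mul, map_smul, P_eps, add_mul, sub_mul, neg_mul,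
    smul_mul_assoc, mul_assoc, ctr_eps_mul, ctr_eps, ctr6_eps_mul, ctr6_eps, mul_smul_comm,
    mul_one, smul_sub, smul_add, mul_sub, mul_add, Pi.single_apply, Fin.succ_ne_zero]


theorem stmt5 (χ₆ : E6 →ₗ[ℝ] E6) (hχ : ∀ v : V6, χ₆ (ctr6 v ω6) = ctr6 v ρ6) :
    (∀ α ∈ Λ27, ∃! p : ℝ × V6,
      α = p.1 • P ω6 + P (ExteriorAlgebra.ι ℝ p.2) * ε 0 +
            P (χ₆ (ExteriorAlgebra.ι ℝ p.2))) ∧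
    (∀ (l : ℝ) (w : V6),
      l • P ω6 + P (ExteriorAlgebra.ι ℝ w) * ε 0 + P (χ₆ (ExteriorAlgebra.ι ℝ w)) ∈ Λ27) := by
  -- evaluate χ₆ on arbitrary 1-forms
  have chi_eval : ∀ w : V6, χ₆ (ExteriorAlgebra.ι ℝ w) = ctr6 (Jinv w) ρ6 := fun w => by
    rw [K1 w]; exact hχ _
  -- the expression as a value of iotaPhi
  have expr_eq : ∀ (l : ℝ) (w : V6),
      l • P ω6 + P (ExteriorAlgebra.ι ℝ w) * ε 0 + P (χ₆ (ExteriorAlgebra.ι ℝ w)) =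
        iotaPhi (Fin.cons l (Jinv w)) := by
    intro l w
    rw [K2]
    have h1 : (fun i => (Fin.cons l (Jinv w) : V7) i.succ) = Jinv w :=
      funext fun i => rfl
    rw [h1, Fin.cons_zero, ← K1, chi_eval]
  -- injectivity
  have inj : ∀ (l l' : ℝ) (w w' : V6),
      l • P ω6 + P (ExteriorAlgebra.ι ℝ w) * ε 0 + P (χ₆ (ExteriorAlgebra.ι ℝ w)) =
        l' • P ω6 + P (ExteriorAlgebra.ι ℝ w') * ε 0 + P (χ₆ (ExteriorAlgebra.ι ℝ w')) →
      (l, w) = (l', w') := by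
    intro l l' w w' h
    rw [chi_eval w, chi_eval w'] at h
    have hw : w = w' := by
      have h0 := congrArg (ctr (Pi.single 0 1)) h
      rw [key0, key0, neg_inj, P_ι, P_ι, ExteriorAlgebra.ι_inj] at h0
      funext i
      have := congrFun h0 i.succ
      simpa [incl, Fin.cons_succ] using this
    have hl : l = l' := by
      have h2 := congrArg (ctr (Pi.single 2 1)) (congrArg (ctr (Pi.single 1 1)) h)
      rw [keyc, keyc, ← Algebra.algebraMap_eq_smul_one, ← Algebra.algebraMap_eq_smul_one] at h2
      exact (ExteriorAlgebra.algebraMap_inj (M := V7) l l').mp h2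
    rw [hw, hl]
  constructor
  · rintro α ⟨v, hv⟩
    refine ⟨(v 0, Jmap (fun i => v i.succ)), ?_, ?_⟩
    · dsimp only
      rw [← hv, K2, chi_eval, K1']
      have h1 : Jinv (Jmap fun i => v i.succ) = fun i => v i.succ := by
        funext j
        fin_cases j <;> simp
      rw [h1]
    · rintro ⟨l, w⟩ hq
      have h0 : α = (v 0) • P ω6 + P (ExteriorAlgebra.ι ℝ (Jmap fun i => v i.succ)) * ε 0 +
          P (χ₆ (ExteriorAlgebra.ι ℝ (Jmap fun i => v i.succ))) := by
        rw [← hv, K2, chi_eval, K1']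
        have h1 : Jinv (Jmap fun i => v i.succ) = fun i => v i.succ := by
          funext j
          fin_cases j <;> simp
        rw [h1]
      exact inj l (v 0) w (Jmap fun i => v i.succ) (hq.symm.trans h0)
  · intro l w
    exact ⟨Fin.cons l (Jinv w), (expr_eq l w).symm⟩
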